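/- Let F : [0,∞) → [0,∞) be increasing and left-continuous with F(0)=0, and ψ(y) = ∫₀^{F⁻¹(y)} (√y − √{F(λ)})² dλ. Then ψ(y) = ∫₀^1 ∫₀^y F⁻¹(t²u) du dt. -/

import Mathlib

open MeasureTheory Set Real Filter


/-- Identity (41)–(12): for `F : [0,∞) → [0,∞)` increasing, left-continuous with
`F 0 = 0`, the function `ψ(y) = ∫₀^{F⁻¹(y)} (√y − √(F λ))² dλ` equals
`∫₀^1 ∫₀^y F⁻¹(t²u) du dt`. -/
theorem stmt_5 (F : ℝ → ℝ) (hmono : Monotone F) (hnn : ∀ x, 0 ≤ F x)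
    (hF0 : ∀ x ≤ (0:ℝ), F x = 0)
    (hleftcont : ∀ x, ContinuousWithinAt F (Set.Iio x) x)
    (Finv : ℝ → ℝ) (hFinv : ∀ u, 0 ≤ u → IsLUB {l : ℝ | 0 ≤ l ∧ F l ≤ u} (Finv u))
    (ψ : ℝ → ℝ)
    (hψ : ∀ y, ψ y = ∫ l in (0:ℝ)..(Finv y), (Real.sqrt y - Real.sqrt (F l)) ^ 2)
    (y : ℝ) (hy : 0 ≤ y) :
    ψ y = ∫ t in (0:ℝ)..1, ∫ u in (0:ℝ)..y, Finv (t ^ 2 * u) := by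
  have hF0' : F 0 = 0 := hF0 0 le_rfl
  have hFinv_nn : ∀ v, 0 ≤ v → 0 ≤ Finv v := fun v hv =>
    (hFinv v hv).1 ⟨le_rfl, by rw [hF0']; exact hv⟩
  have hFinv_mono : ∀ v w, 0 ≤ v → v ≤ w → Finv v ≤ Finv w := fun v w hv hvw =>
    (hFinv v hv).2 fun l hl => (hFinv w (hv.trans hvw)).1 ⟨hl.1, hl.2.trans hvw⟩
  have hL1 : ∀ v, 0 ≤ v → F (Finv v) ≤ v := by
    intro v hv
    rcases eq_or_lt_of_le (hFinv_nn v hv) with h0 | h0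
    · rw [← h0, hF0']; exact hv
    · have hall : ∀ l ∈ Iio (Finv v), F l ≤ v := by
        intro l hl
        rcases le_or_gt 0 l with hl0 | hl0
        · have hnub : ¬ l ∈ upperBounds {l : ℝ | 0 ≤ l ∧ F l ≤ v} := fun hub =>
            absurd ((hFinv v hv).2 hub) (not_le.2 hl)
          rw [mem_upperBounds] at hnub
          push_neg at hnub
          obtain ⟨s, hs, hls⟩ := hnub
          exact (hmono hls.le).trans hs.2
        · rw [hF0 l hl0.le]; exact hv
      exact le_of_tendsto (hleftcont (Finv v)) (eventually_nhdsWithin_of_forall hall)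
  have hL2 : ∀ v, 0 ≤ v → ∀ l, 0 ≤ l → (F l ≤ v ↔ l ≤ Finv v) := fun v hv l hl =>
    ⟨fun h => (hFinv v hv).1 ⟨hl, h⟩, fun h => (hmono h).trans (hL1 v hv)⟩
  have ha0 : 0 ≤ Finv y := hFinv_nn y hy
  have hFmeas : Measurable F := hmono.measurable
  -- L5 : Finv v as an integral over [0, Finv y]
  have hL5 : ∀ v, 0 ≤ v → v ≤ y →
      (∫ l in Ioc (0:ℝ) (Finv y), (if F l ≤ v then (1:ℝ) else 0)) = Finv v := by
    intro v hv0 hvy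
    have hSm : MeasurableSet {l : ℝ | F l ≤ v} := measurableSet_le hFmeas measurable_const
    have hind : (fun l => if F l ≤ v then (1:ℝ) else 0)
        = Set.indicator {l : ℝ | F l ≤ v} (fun _ => (1:ℝ)) := by
      ext l; simp [Set.indicator_apply, mem_setOf_eq]
    rw [hind, integral_indicator hSm, Measure.restrict_restrict hSm, setIntegral_const]
    have hset : {l : ℝ | F l ≤ v} ∩ Ioc 0 (Finv y) = Ioc 0 (Finv v) := by
      ext l
      simp only [mem_inter_iff, mem_setOf_eq, mem_Ioc]
      constructor
      · rintro ⟨h1, h2, h3⟩; exact ⟨h2, (hL2 v hv0 l h2.le).1 h1⟩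
      · rintro ⟨h1, h2⟩
        exact ⟨(hL2 v hv0 l h1.le).2 h2, h1, h2.trans (hFinv_mono v y hv0 hvy)⟩
    rw [hset, measureReal_def, Real.volume_Ioc, smul_eq_mul, mul_one,
      ENNReal.toReal_ofReal (by linarith [hFinv_nn v hv0])]
    ring
  -- inner u-integral computation
  have hInner : ∀ c : ℝ, 0 ≤ c → ∀ t : ℝ, 0 < t →
      (∫ u in Ioc (0:ℝ) y, (if c ≤ t ^ 2 * u then (1:ℝ) else 0)) = max (y - c / t ^ 2) 0 := by
    intro c hc t ht
    have ht2 : (0:ℝ) < t ^ 2 := by positivity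
    have hm0 : 0 ≤ c / t ^ 2 := div_nonneg hc ht2.le
    have hset : {u : ℝ | c ≤ t ^ 2 * u} = Ici (c / t ^ 2) := by
      ext u
      simp only [mem_setOf_eq, mem_Ici]
      rw [div_le_iff₀ ht2, mul_comm]
    have hind : (fun u => if c ≤ t ^ 2 * u then (1:ℝ) else 0)
        = Set.indicator (Ici (c / t ^ 2)) (fun _ => (1:ℝ)) := by
      ext u; rw [← hset]; simp [Set.indicator_apply, mem_setOf_eq]
    rw [hind, integral_indicator measurableSet_Ici, Measure.restrict_restrict measurableSet_Ici,
      setIntegral_const, smul_eq_mul, mul_one]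
    have h1 : volume (Ici (c / t ^ 2) ∩ Ioc 0 y) = volume (Ioc (c / t ^ 2) y) := by
      have he : (Ici (c / t ^ 2) ∩ Ioc 0 y : Set ℝ) =ᶠ[ae volume] (Ioi (c / t ^ 2) ∩ Ioc 0 y : Set ℝ) :=
        ae_eq_set_inter (Ioi_ae_eq_Ici (a := c / t ^ 2)).symm (EventuallyEq.refl _ _)
      rw [measure_congr he, inter_comm, Set.Ioc_inter_Ioi, max_eq_right hm0]
    rw [measureReal_def, h1, Real.volume_Ioc, ENNReal.toReal_ofReal', max_comm]
  -- L6 : the double (t,u) integral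
  have hL6 : ∀ c : ℝ, 0 ≤ c → c ≤ y →
      (∫ t in Ioc (0:ℝ) 1, ∫ u in Ioc (0:ℝ) y, (if c ≤ t ^ 2 * u then (1:ℝ) else 0))
        = (Real.sqrt y - Real.sqrt c) ^ 2 := by
    intro c hc hcy
    rw [setIntegral_congr_fun measurableSet_Ioc (fun t ht => hInner c hc t ht.1),
      ← intervalIntegral.integral_of_le zero_le_one]
    rcases eq_or_lt_of_le hc with h0 | h0
    · rw [← h0]
      simp only [zero_div, sub_zero, max_eq_left hy, Real.sqrt_zero]
      rw [intervalIntegral.integral_const, smul_eq_mul, sub_zero, one_mul, Real.sq_sqrt hy]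
    · have hy0 : 0 < y := lt_of_lt_of_le h0 hcy
      set b := Real.sqrt (c / y) with hbdef
      have hb0 : 0 < b := Real.sqrt_pos.2 (div_pos h0 hy0)
      have hb1 : b ≤ 1 := Real.sqrt_le_one.2 ((div_le_one hy0).2 hcy)
      have hb2 : b ^ 2 = c / y := Real.sq_sqrt (div_nonneg h0.le hy0.le)
      have hcb : c / b ^ 2 = y := by rw [hb2]; field_simp
      have hbsy : b * Real.sqrt y = Real.sqrt c := by
        rw [hbdef, ← Real.sqrt_mul (div_nonneg h0.le hy0.le), div_mul_cancel₀ c hy0.ne']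
      have hi1 : IntervalIntegrable (fun t => max (y - c / t ^ 2) 0) volume 0 b := by
        rw [intervalIntegrable_iff]
        have heq : EqOn (fun t => max (y - c / t ^ 2) 0) (fun _ => (0:ℝ)) (Set.uIoc (0:ℝ) b) := by
          intro t ht
          rw [uIoc_of_le hb0.le] at ht
          have ht2 : (0:ℝ) < t ^ 2 := pow_pos ht.1 2
          have : c / b ^ 2 ≤ c / t ^ 2 :=
            div_le_div_of_nonneg_left h0.le ht2 (pow_le_pow_left₀ ht.1.le ht.2 2)
          rw [hcb] at this
          simp only [max_eq_right (by linarith : y - c / t ^ 2 ≤ 0)]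
        exact (integrableOn_congr_fun heq measurableSet_uIoc).2 (integrableOn_zero)
      have hcont : ContinuousOn (fun t : ℝ => y - c / t ^ 2) (uIcc b 1) := by
        rw [uIcc_of_le hb1]
        apply continuousOn_const.sub
        apply continuousOn_const.div (continuousOn_pow 2)
        intro t ht
        have : 0 < t := lt_of_lt_of_le hb0 ht.1
        positivity
      have heq2 : EqOn (fun t => max (y - c / t ^ 2) 0) (fun t : ℝ => y - c / t ^ 2) (Set.uIoc b 1) := by
        intro t ht
        rw [uIoc_of_le hb1] at ht
        have htp : 0 < t := lt_trans hb0 ht.1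
        have : c / t ^ 2 ≤ c / b ^ 2 :=
          div_le_div_of_nonneg_left h0.le (pow_pos hb0 2) (pow_le_pow_left₀ hb0.le ht.1.le 2)
        rw [hcb] at this
        exact max_eq_left (by linarith)
      have hi2 : IntervalIntegrable (fun t => max (y - c / t ^ 2) 0) volume b 1 := by
        rw [intervalIntegrable_iff]
        exact (integrableOn_congr_fun heq2 measurableSet_uIoc).2
          (intervalIntegrable_iff.1 (hcont.intervalIntegrable))
      rw [← intervalIntegral.integral_add_adjacent_intervals hi1 hi2]
      have e1 : ∫ t in (0:ℝ)..b, max (y - c / t ^ 2) 0 = 0 := by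
        rw [intervalIntegral.integral_congr_ae (ae_of_all _ fun t ht => ?_)]
        · exact intervalIntegral.integral_zero
        · rw [uIoc_of_le hb0.le] at ht
          have ht2 : (0:ℝ) < t ^ 2 := pow_pos ht.1 2
          have : c / b ^ 2 ≤ c / t ^ 2 :=
            div_le_div_of_nonneg_left h0.le ht2 (pow_le_pow_left₀ ht.1.le ht.2 2)
          rw [hcb] at this
          exact max_eq_right (by linarith)
      have e2 : ∫ t in b..1, max (y - c / t ^ 2) 0 = ∫ t in b..1, (y - c / t ^ 2) :=
        intervalIntegral.integral_congr_ae (ae_of_all _ fun t ht => heq2 ht)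
      rw [e1, e2, zero_add]
      have hii : IntervalIntegrable (fun t : ℝ => c / t ^ 2) volume b 1 := by
        apply ContinuousOn.intervalIntegrable
        rw [uIcc_of_le hb1]
        apply continuousOn_const.div (continuousOn_pow 2)
        intro t ht
        have : 0 < t := lt_of_lt_of_le hb0 ht.1
        positivity
      rw [intervalIntegral.integral_sub (intervalIntegrable_const) hii,
        intervalIntegral.integral_const, smul_eq_mul]
      have hz : ∫ t in b..1, c / t ^ 2 = c * (b⁻¹ - 1) := by
        have hrw : (fun t : ℝ => c / t ^ 2) = fun t : ℝ => c * t ^ (-2 : ℤ) := by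
          ext t; rw [zpow_neg, zpow_two, ← pow_two, div_eq_mul_inv]
        rw [hrw, intervalIntegral.integral_const_mul,
          integral_zpow (Or.inr ⟨by norm_num, by
            rw [uIcc_of_le hb1]; intro hmem; exact absurd hmem.1 (not_le.2 hb0)⟩)]
        push_cast
        field_simp
        ring
      rw [hz]
      have hsy : Real.sqrt y ^ 2 = y := Real.sq_sqrt hy0.le
      have hsc : Real.sqrt c ^ 2 = c := Real.sq_sqrt h0.le
      have hsyp : 0 < Real.sqrt y := Real.sqrt_pos.2 hy0
      field_simp
      nlinarith [hbsy, hsy, hsc, hb0, sq_nonneg (b * Real.sqrt y - Real.sqrt c)]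
  haveI hμ1 : IsFiniteMeasure (volume.restrict (Ioc (0:ℝ) 1)) :=
    ⟨by rw [Measure.restrict_apply_univ]; exact measure_Ioc_lt_top⟩
  haveI hμ2 : IsFiniteMeasure (volume.restrict (Ioc (0:ℝ) y)) :=
    ⟨by rw [Measure.restrict_apply_univ]; exact measure_Ioc_lt_top⟩
  haveI hμ3 : IsFiniteMeasure (volume.restrict (Ioc (0:ℝ) (Finv y))) :=
    ⟨by rw [Measure.restrict_apply_univ]; exact measure_Ioc_lt_top⟩
  have stepA : ∀ t : ℝ,
      (∫ u in Ioc (0:ℝ) y, ∫ l in Ioc (0:ℝ) (Finv y), (if F l ≤ t ^ 2 * u then (1:ℝ) else 0))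
      = ∫ l in Ioc (0:ℝ) (Finv y), ∫ u in Ioc (0:ℝ) y, (if F l ≤ t ^ 2 * u then (1:ℝ) else 0) := by
    intro t
    apply MeasureTheory.integral_integral_swap
    have hs : MeasurableSet {p : ℝ × ℝ | F p.2 ≤ t ^ 2 * p.1} :=
      measurableSet_le (hFmeas.comp measurable_snd) (measurable_fst.const_mul _)
    have hind : Function.uncurry (fun u l => if F l ≤ t ^ 2 * u then (1:ℝ) else 0)
        = Set.indicator {p : ℝ × ℝ | F p.2 ≤ t ^ 2 * p.1} (fun _ => (1:ℝ)) := by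
      ext p; simp [Function.uncurry, Set.indicator_apply, mem_setOf_eq]
    rw [hind, integrable_indicator_iff hs]
    exact integrableOn_const (measure_lt_top _ _).ne
  have stepB :
      (∫ t in Ioc (0:ℝ) 1, ∫ l in Ioc (0:ℝ) (Finv y),
          (∫ u in Ioc (0:ℝ) y, (if F l ≤ t ^ 2 * u then (1:ℝ) else 0)))
      = ∫ l in Ioc (0:ℝ) (Finv y), ∫ t in Ioc (0:ℝ) 1,
          (∫ u in Ioc (0:ℝ) y, (if F l ≤ t ^ 2 * u then (1:ℝ) else 0)) := by
    apply MeasureTheory.integral_integral_swap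
    have hs : MeasurableSet {q : (ℝ × ℝ) × ℝ | F q.1.2 ≤ q.1.1 ^ 2 * q.2} :=
      measurableSet_le (hFmeas.comp (measurable_snd.comp measurable_fst))
        (((measurable_fst.comp measurable_fst).pow_const 2).mul measurable_snd)
    have hG : StronglyMeasurable
        (fun q : (ℝ × ℝ) × ℝ => if F q.1.2 ≤ q.1.1 ^ 2 * q.2 then (1:ℝ) else 0) := by
      have hind : (fun q : (ℝ × ℝ) × ℝ => if F q.1.2 ≤ q.1.1 ^ 2 * q.2 then (1:ℝ) else 0)
          = Set.indicator {q : (ℝ × ℝ) × ℝ | F q.1.2 ≤ q.1.1 ^ 2 * q.2} (fun _ => (1:ℝ)) := by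
        ext q; simp [Set.indicator_apply, mem_setOf_eq]
      rw [hind]; exact stronglyMeasurable_const.indicator hs
    have hmeasH : StronglyMeasurable (Function.uncurry (fun t l =>
        ∫ u in Ioc (0:ℝ) y, (if F l ≤ t ^ 2 * u then (1:ℝ) else 0))) :=
      hG.integral_prod_right'
    apply Integrable.mono' (integrable_const y) hmeasH.aestronglyMeasurable
    apply ae_of_all
    rintro ⟨t, l⟩
    calc ‖∫ u in Ioc (0:ℝ) y, (if F l ≤ t ^ 2 * u then (1:ℝ) else 0)‖
        ≤ 1 * ((volume.restrict (Ioc (0:ℝ) y)) univ).toReal :=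
          norm_integral_le_of_norm_le_const (ae_of_all _ fun u => by split <;> simp)
      _ = y := by
          rw [Measure.restrict_apply_univ, Real.volume_Ioc, one_mul, sub_zero,
            ENNReal.toReal_ofReal hy]
  have key : ∀ t ∈ Ioc (0:ℝ) 1,
      (∫ u in Ioc (0:ℝ) y, Finv (t ^ 2 * u))
      = ∫ l in Ioc (0:ℝ) (Finv y), ∫ u in Ioc (0:ℝ) y,
          (if F l ≤ t ^ 2 * u then (1:ℝ) else 0) := by
    intro t ht
    rw [← stepA t]
    apply setIntegral_congr_fun measurableSet_Ioc
    intro u hu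
    exact (hL5 (t ^ 2 * u) (mul_nonneg (sq_nonneg t) hu.1.le)
      (by
        have h1 : t ^ 2 ≤ 1 := by nlinarith [ht.1, ht.2]
        calc t ^ 2 * u ≤ 1 * u := mul_le_mul_of_nonneg_right h1 hu.1.le
          _ = u := one_mul u
          _ ≤ y := hu.2)).symm
  rw [hψ y, intervalIntegral.integral_of_le ha0]
  have e1 : (∫ l in Ioc (0:ℝ) (Finv y), (Real.sqrt y - Real.sqrt (F l)) ^ 2)
      = ∫ l in Ioc (0:ℝ) (Finv y), ∫ t in Ioc (0:ℝ) 1, ∫ u in Ioc (0:ℝ) y,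
          (if F l ≤ t ^ 2 * u then (1:ℝ) else 0) :=
    setIntegral_congr_fun measurableSet_Ioc fun l hl =>
      (hL6 (F l) (hnn l) ((hL2 y hy l hl.1.le).2 hl.2)).symm
  rw [e1, ← stepB]
  have e2 : (∫ t in Ioc (0:ℝ) 1, ∫ l in Ioc (0:ℝ) (Finv y), ∫ u in Ioc (0:ℝ) y,
      (if F l ≤ t ^ 2 * u then (1:ℝ) else 0))
      = ∫ t in Ioc (0:ℝ) 1, ∫ u in Ioc (0:ℝ) y, Finv (t ^ 2 * u) :=
    setIntegral_congr_fun measurableSet_Ioc fun t ht => (key t ht).symm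
  rw [e2, intervalIntegral.integral_of_le zero_le_one]
  exact setIntegral_congr_fun measurableSet_Ioc fun t _ =>
    (intervalIntegral.integral_of_le hy).symm
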